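/- For every integer n ≥ 0, 5·A_5^b(n) = (2n+1)(5 + 27n + 71n² + 88n³ + 44n⁴); moreover, for every integer n ≥ 1, A_5^s(n) = 2 + 50n² + 88n⁴. -/

import Mathlib

def ch (a : ℤ) (r : ℕ) : ℤ := if 0 ≤ a then ((a.toNat.choose r : ℕ) : ℤ) else 0

lemma ch_pascal (a : ℤ) (r : ℕ) : ch (a + 1) (r + 1) = ch a (r + 1) + ch a r := by
  unfold ch
  rcases lt_trichotomy a (-1) with h | h | h
  · rw [if_neg (by omega), if_neg (by omega), if_neg (by omega)]; ring
  · subst h; norm_num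
  · have h0 : (0:ℤ) ≤ a := by omega
    rw [if_pos (by omega), if_pos h0, if_pos h0]
    have : (a + 1).toNat = a.toNat + 1 := by omega
    rw [this, Nat.choose_succ_succ]
    push_cast; ring

lemma ch_sum (M : ℕ) (y : ℤ) (r : ℕ) :
    ∑ t ∈ Finset.range (M + 1), ch (y - t) r
      = ch (y + 1) (r + 1) - ch (y - M) (r + 1) := by
  induction M with
  | zero => simp [ch_pascal y r]
  | succ M ih =>
    rw [Finset.sum_range_succ, ih]
    have h2 := ch_pascal (y - (M+1)) r
    have e : y - (M+1) + 1 = y - M := by ring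
    rw [e] at h2
    have e2 : y - ((M:ℤ)+1) = y - ((M+1 : ℕ) : ℤ) := by push_cast; ring
    rw [e2] at h2
    linarith

lemma reindex (m : ℕ) (g : ℕ → ℤ) :
    ∑ j ∈ Finset.range (m+1), (-1)^j * (Nat.choose m j : ℤ) * (g j - g (j+1))
      = ∑ j ∈ Finset.range (m+2), (-1)^j * (Nat.choose (m+1) j : ℤ) * g j := by
  have A : ∑ j ∈ Finset.range (m+2), (-1)^j * (Nat.choose (m+1) j : ℤ) * g j
      = (∑ j ∈ Finset.range (m+1), (-1)^(j+1) * (Nat.choose (m+1) (j+1) : ℤ) * g (j+1)) + g 0 := by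
    rw [Finset.sum_range_succ' (fun j => (-1)^j * (Nat.choose (m+1) j : ℤ) * g j) (m+1)]
    norm_num
  have B : ∑ j ∈ Finset.range (m+2), (-1)^j * (Nat.choose m j : ℤ) * g j
      = (∑ j ∈ Finset.range (m+1), (-1)^(j+1) * (Nat.choose m (j+1) : ℤ) * g (j+1)) + g 0 := by
    rw [Finset.sum_range_succ' (fun j => (-1)^j * (Nat.choose m j : ℤ) * g j) (m+1)]
    norm_num
  have C : ∑ j ∈ Finset.range (m+2), (-1)^j * (Nat.choose m j : ℤ) * g j
      = ∑ j ∈ Finset.range (m+1), (-1)^j * (Nat.choose m j : ℤ) * g j := by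
    rw [Finset.sum_range_succ]
    simp [Nat.choose_eq_zero_of_lt (Nat.lt_succ_self m)]
  have pascal : ∀ j ∈ Finset.range (m+1),
      (-1:ℤ)^(j+1) * (Nat.choose (m+1) (j+1) : ℤ) * g (j+1)
        = (-1)^(j+1) * (Nat.choose m j : ℤ) * g (j+1)
          + (-1)^(j+1) * (Nat.choose m (j+1) : ℤ) * g (j+1) := by
    intro j _
    rw [Nat.choose_succ_succ]
    push_cast; ring
  rw [A, Finset.sum_congr rfl pascal, Finset.sum_add_distrib]
  have B' : ∑ j ∈ Finset.range (m+1), (-1:ℤ)^(j+1) * (Nat.choose m (j+1) : ℤ) * g (j+1)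
      = ∑ j ∈ Finset.range (m+1), (-1)^j * (Nat.choose m j : ℤ) * g j - g 0 := by
    rw [← C]; rw [B]; ring
  rw [B']
  have : ∀ j ∈ Finset.range (m+1), (-1:ℤ)^j * (Nat.choose m j : ℤ) * (g j - g (j+1))
      = (-1)^j * (Nat.choose m j : ℤ) * g j + (-1)^(j+1) * (Nat.choose m j : ℤ) * g (j+1) := by
    intro j _; ring
  rw [Finset.sum_congr rfl this, Finset.sum_add_distrib]
  ring

def cnt (M : ℕ) : ℕ → ℤ → ℕ
  | 0, S => if S = 0 then 1 else 0
  | k + 1, S => ∑ t ∈ Finset.range (M + 1), cnt M k (S - t)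

lemma cnt_formula (M : ℕ) : ∀ k, ∀ S : ℤ, (cnt M (k+1) S : ℤ) =
    ∑ j ∈ Finset.range (k + 2),
      (-1) ^ j * (Nat.choose (k+1) j : ℤ) * ch (S - j * (M + 1) + k) k := by
  intro k
  induction k with
  | zero =>
    intro S
    have h1 : cnt M 1 S = ∑ t ∈ Finset.range (M + 1), cnt M 0 (S - t) := rfl
    have h0 : ∀ X : ℤ, ((cnt M 0 X : ℕ) : ℤ) = ch X 0 - ch (X - 1) 0 := by
      intro X
      show ((if X = 0 then (1:ℕ) else 0 : ℕ) : ℤ) = _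
      unfold ch
      rcases lt_trichotomy X 0 with h | h | h
      · rw [if_neg (by omega), if_neg (by omega), if_neg (by omega)]; ring
      · rw [if_pos (by omega), if_pos (by omega), if_neg (by omega)]; simp [h]
      · rw [if_neg (by omega), if_pos (by omega), if_pos (by omega)]; simp
    rw [h1]
    push_cast
    calc (∑ t ∈ Finset.range (M + 1), ((cnt M 0 (S - t) : ℕ) : ℤ))
        = ∑ t ∈ Finset.range (M + 1), (ch (S - t) 0 - ch ((S-1) - t) 0) := by
          refine Finset.sum_congr rfl fun t _ => ?_
          rw [h0]; ring_nf
      _ = (ch (S + 1) 1 - ch (S - M) 1) - (ch (S - 1 + 1) 1 - ch (S - 1 - M) 1) := by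
          rw [Finset.sum_sub_distrib, ch_sum, ch_sum]
      _ = ∑ j ∈ Finset.range 2, (-1) ^ j * (Nat.choose 1 j : ℤ) * ch (S - j * (M + 1) + 0) 0 := by
          have p1 := ch_pascal S 0
          have p2 := ch_pascal (S - (M+1)) 0
          have e : S - ((M:ℤ)+1) + 1 = S - M := by ring
          rw [e] at p2
          rw [Finset.sum_range_succ, Finset.sum_range_succ, Finset.sum_range_zero]
          norm_num
          have e1 : S - 1 + 1 = S := by ring
          have e4 : S - 1 - (M:ℤ) = S - ((M:ℤ)+1) := by ring
          rw [e4]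
          norm_num at p1 p2
          linarith
  | succ k ih =>
    intro S
    have h1 : cnt M (k+2) S = ∑ t ∈ Finset.range (M + 1), cnt M (k+1) (S - t) := rfl
    set g : ℕ → ℤ := fun j => ch (S - j * (M + 1) + (k+1)) (k+1) with hg
    have key : ∀ j : ℕ, ∑ t ∈ Finset.range (M+1), ch (S - t - j*(M+1) + k) k = g j - g (j+1) := by
      intro j
      have h := ch_sum M (S - j*(M+1) + k) k
      calc ∑ t ∈ Finset.range (M+1), ch (S - t - j*(M+1) + k) k
          = ∑ t ∈ Finset.range (M+1), ch ((S - j*(M+1) + k) - t) k := by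
            refine Finset.sum_congr rfl fun t _ => ?_
            congr 1; ring
        _ = ch (S - j*(M+1) + k + 1) (k+1) - ch (S - j*(M+1) + k - M) (k+1) := h
        _ = g j - g (j+1) := by
            simp only [hg]
            congr 1
            · congr 1; ring
            · congr 1; push_cast; ring
    calc (cnt M (k+2) S : ℤ)
        = ∑ t ∈ Finset.range (M+1), ((cnt M (k+1) (S - t) : ℕ) : ℤ) := by rw [h1]; push_cast; ring
      _ = ∑ t ∈ Finset.range (M+1), ∑ j ∈ Finset.range (k+2),
            (-1)^j * (Nat.choose (k+1) j : ℤ) * ch (S - t - j*(M+1) + k) k := by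
          refine Finset.sum_congr rfl fun t _ => ?_
          rw [ih (S - t)]
      _ = ∑ j ∈ Finset.range (k+2), ∑ t ∈ Finset.range (M+1),
            (-1)^j * (Nat.choose (k+1) j : ℤ) * ch (S - t - j*(M+1) + k) k := Finset.sum_comm
      _ = ∑ j ∈ Finset.range (k+2), (-1)^j * (Nat.choose (k+1) j : ℤ) * (g j - g (j+1)) := by
          refine Finset.sum_congr rfl fun j _ => ?_
          rw [← Finset.mul_sum, key j]
      _ = ∑ j ∈ Finset.range (k+3), (-1)^j * (Nat.choose (k+2) j : ℤ) * g j := reindex (k+1) g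
      _ = _ := by
          refine Finset.sum_congr rfl fun j _ => ?_
          simp only [hg]
          norm_cast

noncomputable def F (M : ℕ) (k : ℕ) (S : ℤ) : Finset (Fin k → ℤ) :=
  (Fintype.piFinset (fun _ : Fin k => Finset.Icc (0:ℤ) M)).filter (fun p => ∑ i, p i = S)

lemma card_F (M : ℕ) : ∀ k, ∀ S : ℤ, (F M k S).card = cnt M k S := by
  intro k
  induction k with
  | zero =>
    intro S
    simp only [F, cnt]
    rcases eq_or_ne S 0 with h | h
    · subst h
      rw [Finset.filter_true_of_mem (fun p _ => by simp)]
      simp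
    · rw [Finset.filter_false_of_mem (fun p _ => by simpa using (Ne.symm h))]
      simp [h]
  | succ k ih =>
    intro S
    show _ = ∑ t ∈ Finset.range (M + 1), cnt M k (S - t)
    have hmem : ∀ p ∈ F M (k+1) S, p (Fin.last k) ∈ Finset.Icc (0:ℤ) (M:ℤ) := by
      intro p hp
      simp only [F, Finset.mem_filter, Fintype.mem_piFinset] at hp
      exact hp.1 (Fin.last k)
    rw [Finset.card_eq_sum_card_fiberwise hmem]
    refine Finset.sum_nbij' (fun s => s.toNat) (fun t => (t : ℤ)) ?_ ?_ ?_ ?_ ?_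
    · intro s hs; simp at hs ⊢; omega
    · intro t ht; simp at ht ⊢; omega
    · intro s hs; simp at hs ⊢; omega
    · intro t ht; simp
    · intro s hs
      simp only [Finset.mem_Icc] at hs
      have hcast : ((s.toNat : ℕ) : ℤ) = s := by omega
      rw [hcast, ← ih (S - s)]
      refine Finset.card_nbij (fun p => Fin.init p) ?_ ?_ ?_
      · intro p hp
        simp only [Finset.coe_filter, Set.mem_setOf_eq, F, Finset.mem_filter,
          Fintype.mem_piFinset, Finset.mem_Icc, Finset.mem_coe] at hp ⊢
        obtain ⟨⟨h1, h2⟩, h3⟩ := hp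
        refine ⟨fun i => h1 _, ?_⟩
        rw [Fin.sum_univ_castSucc] at h2
        simp only [Fin.init]
        omega
      · intro p hp q hq hpq
        simp only [Finset.coe_filter, Set.mem_setOf_eq] at hp hq
        funext i
        induction i using Fin.lastCases with
        | last => rw [hp.2, hq.2]
        | cast i => exact congrFun hpq i
      · intro q hq
        simp only [F, Finset.coe_filter, Set.mem_setOf_eq, Finset.mem_filter,
          Fintype.mem_piFinset, Finset.mem_Icc, Finset.mem_coe] at hq
        obtain ⟨h1, h2⟩ := hq
        refine ⟨Fin.snoc q s, ?_, ?_⟩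
        · simp only [Finset.coe_filter, Set.mem_setOf_eq, F, Finset.mem_filter,
            Fintype.mem_piFinset, Finset.mem_Icc]
          refine ⟨⟨fun i => ?_, ?_⟩, ?_⟩
          · induction i using Fin.lastCases with
            | last => simpa using hs
            | cast i => simpa using (h1 i)
          · rw [Fin.sum_univ_castSucc]
            simp only [Fin.snoc_castSucc, Fin.snoc_last]
            omega
          · simp [Fin.snoc_last]
        · simp [Fin.init_snoc]

/-- `Akb k n` : the number of vectors `p ∈ ℤ^(k+1)` with `|p i| ≤ n` for all `i`
and zero coordinate sum (bulk count for the `A_k` lattice). -/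
noncomputable def Akb (k n : ℕ) : ℕ :=
  Nat.card {p : Fin (k + 1) → ℤ // (∀ i, |p i| ≤ (n : ℤ)) ∧ ∑ i, p i = 0}

/-- `Aks k n` : the number of vectors `p ∈ ℤ^(k+1)` with `max_i |p i| = n`
and zero coordinate sum (surface count for the `A_k` lattice). -/
noncomputable def Aks (k n : ℕ) : ℕ :=
  Nat.card {p : Fin (k + 1) → ℤ //
    (∀ i, |p i| ≤ (n : ℤ)) ∧ (∃ i, |p i| = (n : ℤ)) ∧ ∑ i, p i = 0}

lemma akb_eq_cnt (n : ℕ) : Akb 5 n = cnt (2*n) 6 (6*n) := by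
  rw [Akb]
  have e : {p : Fin 6 → ℤ // (∀ i, |p i| ≤ (n : ℤ)) ∧ ∑ i, p i = 0}
      ≃ {q : Fin 6 → ℤ // q ∈ F (2*n) 6 (6*n)} := by
    refine ⟨fun p => ⟨fun i => p.1 i + n, ?_⟩, fun q => ⟨fun i => q.1 i - n, ?_⟩, ?_, ?_⟩
    · obtain ⟨p, hp, hs⟩ := p
      simp only [F, Finset.mem_filter, Fintype.mem_piFinset, Finset.mem_Icc]
      constructor
      · intro i
        have := hp i
        rw [abs_le] at this
        push_cast
        omega
      · rw [Finset.sum_add_distrib, hs]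
        simp
    · obtain ⟨q, hq⟩ := q
      simp only [F, Finset.mem_filter, Fintype.mem_piFinset, Finset.mem_Icc] at hq
      obtain ⟨hb, hs⟩ := hq
      constructor
      · intro i
        have := hb i
        rw [abs_le]
        push_cast at this ⊢
        omega
      · rw [Finset.sum_sub_distrib, hs]
        simp
    · intro p; ext i; simp
    · intro q; ext i; simp
  rw [Nat.card_congr e, ← card_F]
  rw [Nat.card_eq_finsetCard]

lemma ch_eq_choose {a : ℤ} {b : ℕ} (hb : a = (b:ℤ)) (r : ℕ) :
    ch a r = (Nat.choose b r : ℤ) := by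
  subst hb; simp [ch]

lemma ch_eq_zero {a : ℤ} {r : ℕ} (h : a < r) : ch a r = 0 := by
  unfold ch
  split
  · norm_cast
    apply Nat.choose_eq_zero_of_lt
    omega
  · rfl

lemma cnt_val (n : ℕ) : (cnt (2*n) 6 (6*n) : ℤ) =
    (Nat.choose (6*n+5) 5 : ℤ) - 6 * (Nat.choose (4*n+4) 5 : ℤ)
      + 15 * (Nat.choose (2*n+3) 5 : ℤ) := by
  rw [cnt_formula (2*n) 5 (6*n)]
  rw [Finset.sum_range_succ, Finset.sum_range_succ, Finset.sum_range_succ,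
    Finset.sum_range_succ, Finset.sum_range_succ, Finset.sum_range_succ,
    Finset.sum_range_succ, Finset.sum_range_zero]
  push_cast
  rw [ch_eq_choose (a := 6 * (n:ℤ) - 0 * (2 * (n:ℤ) + 1) + 5) (b := 6*n+5) (by push_cast; ring),
      ch_eq_choose (a := 6 * (n:ℤ) - 1 * (2 * (n:ℤ) + 1) + 5) (b := 4*n+4) (by push_cast; ring),
      ch_eq_choose (a := 6 * (n:ℤ) - 2 * (2 * (n:ℤ) + 1) + 5) (b := 2*n+3) (by push_cast; ring),
      ch_eq_zero (a := 6 * (n:ℤ) - 3 * (2 * (n:ℤ) + 1) + 5) (by push_cast; omega),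
      ch_eq_zero (a := 6 * (n:ℤ) - 4 * (2 * (n:ℤ) + 1) + 5) (by push_cast; omega),
      ch_eq_zero (a := 6 * (n:ℤ) - 5 * (2 * (n:ℤ) + 1) + 5) (by push_cast; omega),
      ch_eq_zero (a := 6 * (n:ℤ) - 6 * (2 * (n:ℤ) + 1) + 5) (by push_cast; omega)]
  simp only [show Nat.choose 6 0 = 1 from rfl, show Nat.choose 6 1 = 6 from rfl,
    show Nat.choose 6 2 = 15 from rfl]
  push_cast
  ring

lemma bulk_finite (k : ℕ) (t : ℤ) :
    {p : Fin k → ℤ | (∀ i, |p i| ≤ t) ∧ ∑ i, p i = 0}.Finite := by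
  apply Set.Finite.subset (Finset.finite_toSet (Fintype.piFinset (fun _ : Fin k => Finset.Icc (-t) t)))
  intro p hp
  simp only [Finset.coe_sort_coe, Finset.mem_coe, Fintype.mem_piFinset, Finset.mem_Icc]
  intro i
  have := hp.1 i
  rw [abs_le] at this
  exact this

lemma akb_split (m : ℕ) : Akb 5 (m + 1) = Aks 5 (m + 1) + Akb 5 m := by
  rw [Akb, Aks, Akb]
  have h1 : ∀ (P : (Fin 6 → ℤ) → Prop), Nat.card {p : Fin 6 → ℤ // P p} = {p : Fin 6 → ℤ | P p}.ncard :=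
    fun P => Nat.card_coe_set_eq _
  rw [h1, h1 (fun p => (∀ i, |p i| ≤ ((m+1 : ℕ) : ℤ)) ∧ (∃ i, |p i| = ((m+1:ℕ) : ℤ)) ∧ ∑ i, p i = 0),
    h1 (fun p => (∀ i, |p i| ≤ ((m : ℕ) : ℤ)) ∧ ∑ i, p i = 0)]
  have hun : {p : Fin 6 → ℤ | (∀ i, |p i| ≤ ((m+1 : ℕ) : ℤ)) ∧ ∑ i, p i = 0}
      = {p : Fin 6 → ℤ | (∀ i, |p i| ≤ ((m+1 : ℕ) : ℤ)) ∧ (∃ i, |p i| = ((m+1:ℕ) : ℤ)) ∧ ∑ i, p i = 0}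
        ∪ {p : Fin 6 → ℤ | (∀ i, |p i| ≤ ((m : ℕ) : ℤ)) ∧ ∑ i, p i = 0} := by
    ext p
    simp only [Set.mem_setOf_eq, Set.mem_union]
    constructor
    · rintro ⟨hb, hs⟩
      by_cases h : ∀ i, |p i| ≤ (m : ℤ)
      · exact Or.inr ⟨h, hs⟩
      · push_neg at h
        obtain ⟨i, hi⟩ := h
        refine Or.inl ⟨hb, ⟨i, ?_⟩, hs⟩
        have := hb i
        push_cast at this ⊢
        omega
    · rintro (⟨hb, _, hs⟩ | ⟨hb, hs⟩)
      · exact ⟨hb, hs⟩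
      · refine ⟨fun i => ?_, hs⟩
        have := hb i
        push_cast at this ⊢
        omega
  refine hun ▸ Set.ncard_union_eq ?_
    (Set.Finite.subset (bulk_finite 6 ((m+1:ℕ):ℤ)) (fun p hp => ⟨hp.1, hp.2.2⟩))
    (bulk_finite 6 _)
  rw [Set.disjoint_left]
  rintro p ⟨hb, ⟨i, hi⟩, _⟩ ⟨hb', _⟩
  have := hb' i
  push_cast at hi this
  omega

lemma choose5 (b : ℕ) : 120 * (Nat.choose (b+5) 5 : ℤ)
    = (b+5)*(b+4)*(b+3)*(b+2)*(b+1) := by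
  have h := Nat.descFactorial_eq_factorial_mul_choose (b+5) 5
  have h5 : Nat.factorial 5 = 120 := rfl
  have hd : Nat.descFactorial (b+5) 5 = (b+1)*((b+2)*((b+3)*((b+4)*(b+5)))) := by
    simp only [Nat.descFactorial_succ, Nat.descFactorial_zero, Nat.mul_one]
    have e1 : b+5-1 = b+4 := by omega
    have e2 : b+5-2 = b+3 := by omega
    have e3 : b+5-3 = b+2 := by omega
    have e4 : b+5-4 = b+1 := by omega
    have e0 : b + 5 - 0 = b + 5 := rfl
    rw [e0, e1, e2, e3, e4]
  rw [hd, h5] at h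
  have := congrArg (fun x : ℕ => (x : ℤ)) h
  push_cast at this
  linarith [this]

lemma bulk (n : ℕ) : 5 * Akb 5 n
    = (2 * n + 1) * (5 + 27 * n + 71 * n ^ 2 + 88 * n ^ 3 + 44 * n ^ 4) := by
  cases n with
  | zero =>
    have h0 : Akb 5 0 = cnt 0 6 0 := by simpa using akb_eq_cnt 0
    have : cnt 0 6 0 = 1 := by
      norm_num [cnt, Finset.filter_eq']
    rw [h0, this]
    norm_num
  | succ m =>
    have key : (Akb 5 (m+1) : ℤ) = (Nat.choose (6*(m+1)+5) 5 : ℤ)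
        - 6 * (Nat.choose (4*(m+1)+4) 5 : ℤ) + 15 * (Nat.choose (2*(m+1)+3) 5 : ℤ) := by
      rw [akb_eq_cnt (m+1)]; exact cnt_val (m+1)
    have e1 : 6*(m+1)+5 = (6*m+6)+5 := by ring
    have e2 : 4*(m+1)+4 = (4*m+3)+5 := by ring
    have e3 : 2*(m+1)+3 = (2*m)+5 := by ring
    rw [e1, e2, e3] at key
    have h1 := choose5 (6*m+6)
    have h2 := choose5 (4*m+3)
    have h3 := choose5 (2*m)
    -- work over ℤ
    have main : ((5 * Akb 5 (m+1) : ℕ) : ℤ)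
        = (((2 * (m+1) + 1) * (5 + 27 * (m+1) + 71 * (m+1) ^ 2 + 88 * (m+1) ^ 3 + 44 * (m+1) ^ 4) : ℕ) : ℤ) := by
      push_cast
      push_cast at key h1 h2 h3
      apply mul_left_cancel₀ (a := (120:ℤ)) (by norm_num)
      linear_combination 600 * key + 5 * h1 - 30 * h2 + 75 * h3
    exact_mod_cast main

theorem A5_bulk_surface :
    (∀ n : ℕ, 5 * Akb 5 n = (2 * n + 1) * (5 + 27 * n + 71 * n ^ 2 + 88 * n ^ 3 + 44 * n ^ 4)) ∧
    (∀ n : ℕ, 1 ≤ n → Aks 5 n = 2 + 50 * n ^ 2 + 88 * n ^ 4) := by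
  refine ⟨bulk, ?_⟩
  intro n hn
  obtain ⟨m, rfl⟩ : ∃ m, n = m + 1 := ⟨n - 1, by omega⟩
  have hsplit := akb_split m
  have hb1 := bulk (m+1)
  have hb0 := bulk m
  have key : (2 * (m+1) + 1) * (5 + 27 * (m+1) + 71 * (m+1) ^ 2 + 88 * (m+1) ^ 3 + 44 * (m+1) ^ 4)
      = 5 * (2 + 50 * (m+1) ^ 2 + 88 * (m+1) ^ 4)
        + (2 * m + 1) * (5 + 27 * m + 71 * m ^ 2 + 88 * m ^ 3 + 44 * m ^ 4) := by ring
  omega
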